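/- If G is a connected graph with girth(G) ≥ 5, then the co-chordal cover number of G equals the domination number of the line graph of G: cochord(G) = γ(L(G)). -/

import Mathlib

open SimpleGraph

variable {V : Type*}

/-- The closed neighborhood `N_G[x]` of a vertex. -/
def closedNbhd (G : SimpleGraph V) (x : V) : Set V := insert x (G.neighborSet x)

/-- `x` is codominated: some `y ≠ x` has `N_G[y] ⊆ N_G[x]`. -/
def Codominated (G : SimpleGraph V) (x : V) : Prop :=
  ∃ y, y ≠ x ∧ closedNbhd G y ⊆ closedNbhd G x

/-- `S` is an independent set of `G`. -/
def IsIndep (G : SimpleGraph V) (S : Set V) : Prop :=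
  ∀ ⦃u⦄, u ∈ S → ∀ ⦃v⦄, v ∈ S → ¬ G.Adj u v

/-- `x` is a shedding vertex of `G`: every independent set of `G - N_G[x]`
extends by a neighbor of `x`. -/
def SheddingVertex (G : SimpleGraph V) (x : V) : Prop :=
  ∀ S : Set V, S ⊆ (closedNbhd G x)ᶜ → IsIndep G S →
    ∃ v ∈ G.neighborSet x, IsIndep G (insert v S)

/-- The closed neighborhood `N_G[I]` of a set of vertices. -/
def closedNbhdSet (G : SimpleGraph V) (I : Set V) : Set V :=
  I ∪ {v | ∃ u ∈ I, G.Adj u v}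

/-- `x` is codominated in the subgraph of `G` induced on `A`. -/
def CodominatedOn (G : SimpleGraph V) (A : Finset V) (x : V) : Prop :=
  ∃ y ∈ A, y ≠ x ∧ ∀ z ∈ A, (z = y ∨ G.Adj y z) → (z = x ∨ G.Adj x z)

/-- The subgraph of `G` induced on `A` is codismantlable. -/
def CodismantlableOn (G : SimpleGraph V) [DecidableEq V] (A : Finset V) : Prop :=
  (∀ x ∈ A, ∀ y ∈ A, ¬ G.Adj x y) ∨
    ∃ x, ∃ h : x ∈ A, CodominatedOn G A x ∧ CodismantlableOn G (A.erase x)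
termination_by A.card
decreasing_by exact Finset.card_erase_lt_of_mem h

/-- `G` is codismantlable. -/
def Codismantlable (G : SimpleGraph V) [Fintype V] [DecidableEq V] : Prop :=
  CodismantlableOn G Finset.univ

/-- A maximal independent set of `G`. -/
def MaxIndep (G : SimpleGraph V) (S : Set V) : Prop :=
  IsIndep G S ∧ ∀ T : Set V, IsIndep G T → S ⊆ T → S = T

/-- `G` is well-covered: all maximal independent sets have the same size. -/
def WellCovered (G : SimpleGraph V) : Prop :=
  ∀ S T : Set V, MaxIndep G S → MaxIndep G T → S.ncard = T.ncard

/-- `G` has no induced cycle of length `n`. -/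
def CycleFree (G : SimpleGraph V) (n : ℕ) : Prop :=
  IsEmpty (cycleGraph n ↪g G)

/-- `G` is chordal: no induced cycle of length at least 4. -/
def Chordal (G : SimpleGraph V) : Prop :=
  ∀ n, 4 ≤ n → CycleFree G n

/-- `M` is a matching of `G` (as a set of edges). -/
def IsMatchingSet (G : SimpleGraph V) (M : Finset (Sym2 V)) : Prop :=
  (∀ e ∈ M, e ∈ G.edgeSet) ∧
    ∀ e ∈ M, ∀ f ∈ M, e ≠ f → ∀ v : V, v ∈ e → v ∉ f

/-- `M` is an induced matching of `G`. -/
def IsInducedMatching (G : SimpleGraph V) (M : Finset (Sym2 V)) : Prop :=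
  IsMatchingSet G M ∧
    ∀ e ∈ M, ∀ f ∈ M, e ≠ f → ∀ u : V, u ∈ e → ∀ v : V, v ∈ f → ¬ G.Adj u v

/-- The matching number `m(G)`. -/
noncomputable def matchNum (G : SimpleGraph V) : ℕ :=
  sSup {n | ∃ M : Finset (Sym2 V), IsMatchingSet G M ∧ M.card = n}

/-- The induced matching number `im(G)`. -/
noncomputable def indMatchNum (G : SimpleGraph V) : ℕ :=
  sSup {n | ∃ M : Finset (Sym2 V), IsInducedMatching G M ∧ M.card = n}

open Classical in
/-- The vertices of `A` outside the closed neighborhood of `x`. -/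
noncomputable def delNbhd (G : SimpleGraph V) [DecidableEq V] (A : Finset V) (x : V) : Finset V :=
  A.filter (fun z => ¬(z = x ∨ G.Adj x z))

/-- `x` is a shedding vertex of the subgraph of `G` induced on `A`. -/
def SheddingOn (G : SimpleGraph V) (A : Finset V) (x : V) : Prop :=
  ∀ S : Set V, S ⊆ ↑A → (∀ u ∈ S, ¬(u = x ∨ G.Adj x u)) → IsIndep G S →
    ∃ v ∈ A, G.Adj x v ∧ IsIndep G (insert v S)

lemma delNbhd_ssubset (G : SimpleGraph V) [DecidableEq V] {A : Finset V} {x : V}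
    (h : x ∈ A) : delNbhd G A x ⊂ A := by
  classical
  refine (Finset.ssubset_iff_of_subset (Finset.filter_subset _ _)).mpr ⟨x, h, ?_⟩
  simp [delNbhd]

/-- The subgraph of `G` induced on `A` is vertex decomposable. -/
noncomputable def VertexDecomposableOn (G : SimpleGraph V) [DecidableEq V] (A : Finset V) :
    Prop :=
  (∀ x ∈ A, ∀ y ∈ A, ¬ G.Adj x y) ∨
    ∃ x, ∃ h : x ∈ A, SheddingOn G A x ∧ VertexDecomposableOn G (A.erase x) ∧
      VertexDecomposableOn G (delNbhd G A x)
termination_by A.card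
decreasing_by
  · exact Finset.card_erase_lt_of_mem h
  · exact Finset.card_lt_card (delNbhd_ssubset G h)

/-- `G` is vertex decomposable. -/
noncomputable def VertexDecomposable (G : SimpleGraph V) [Fintype V] [DecidableEq V] : Prop :=
  VertexDecomposableOn G Finset.univ

/-- The restriction of `G` to `A` codismantles to its restriction to `B`. -/
inductive CodisTo (G : SimpleGraph V) [DecidableEq V] : Finset V → Finset V → Prop
  | refl (A : Finset V) : CodisTo G A A
  | step {A B : Finset V} {x : V} (h : x ∈ A) (hc : CodominatedOn G A x)
      (ht : CodisTo G (A.erase x) B) : CodisTo G A B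

/-- `L` is a codismantling sequence for the subgraph of `G` induced on `A`. -/
def CodisSeq (G : SimpleGraph V) [DecidableEq V] : Finset V → List V → Prop
  | A, [] => ∀ x ∈ A, ∀ y ∈ A, ¬ G.Adj x y
  | A, x :: xs => x ∈ A ∧ CodominatedOn G A x ∧ CodisSeq G (A.erase x) xs

/-- `C` is a vertex cover of `G`. -/
def IsVertexCover (G : SimpleGraph V) (C : Set V) : Prop :=
  ∀ ⦃u v : V⦄, G.Adj u v → u ∈ C ∨ v ∈ C

/-- The co-chordal cover number: the minimum number of co-chordal subgraphs of `G`
covering all edges of `G`. -/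
noncomputable def cochord (G : SimpleGraph V) : ℕ :=
  sInf {k | ∃ H : Fin k → G.Subgraph, (∀ i, Chordal ((H i).coeᶜ)) ∧
    ∀ e ∈ G.edgeSet, ∃ i, e ∈ (H i).edgeSet}

/-- The domination number of a graph. -/
noncomputable def domNum {W : Type*} (K : SimpleGraph W) : ℕ :=
  sInf {n | ∃ D : Finset W, (∀ v : W, v ∈ D ∨ ∃ u ∈ D, K.Adj u v) ∧ D.card = n}


section MyLemmas


lemma no_tri {G : SimpleGraph V} (hg : 5 ≤ G.egirth) {a b c : V} (hab : G.Adj a b)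
    (hbc : G.Adj b c) (hac : G.Adj a c) : False := by
  have h5 := le_egirth.mp hg a (.cons hab (.cons hbc (.cons hac.symm .nil))) ?_
  · simp only [Walk.length_cons, Walk.length_nil] at h5
    exact absurd h5 (by decide)
  · simp [Walk.isCycle_def, Walk.isTrail_def, hab.ne, hbc.ne, hac.ne, hab.ne', hbc.ne', hac.ne',
      Sym2.eq, Sym2.rel_iff]

lemma no_sq {G : SimpleGraph V} (hg : 5 ≤ G.egirth) {a b c d : V} (hab : G.Adj a b)
    (hbc : G.Adj b c) (hcd : G.Adj c d) (had : G.Adj a d) (hac : a ≠ c) (hbd : b ≠ d) : False := by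
  have h5 := le_egirth.mp hg a (.cons hab (.cons hbc (.cons hcd (.cons had.symm .nil)))) ?_
  · simp only [Walk.length_cons, Walk.length_nil] at h5
    exact absurd h5 (by decide)
  · simp [Walk.isCycle_def, Walk.isTrail_def, hab.ne, hbc.ne, hcd.ne, had.ne, hab.ne', hbc.ne',
      hcd.ne', had.ne', hac, hbd, hac.symm, hbd.symm, Sym2.eq, Sym2.rel_iff]

variable {G : SimpleGraph V} {H : G.Subgraph}

lemma my_two_K2 (hch : Chordal H.coeᶜ)
    {p q r s : V} (hpq : H.Adj p q) (hrs : H.Adj r s)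
    (hpr : p ≠ r) (hps : p ≠ s) (hqr : q ≠ r) (hqs : q ≠ s)
    (h1 : ¬ H.Adj p r) (h2 : ¬ H.Adj p s) (h3 : ¬ H.Adj q r) (h4 : ¬ H.Adj q s) : False := by
  have hpq' := hpq.ne
  have hrs' := hrs.ne
  have h1' : ¬ H.Adj r p := fun h => h1 h.symm
  have h2' : ¬ H.Adj s p := fun h => h2 h.symm
  have h3' : ¬ H.Adj r q := fun h => h3 h.symm
  have h4' : ¬ H.Adj s q := fun h => h4 h.symm
  let g : Fin 4 → ↥H.verts := ![⟨p, hpq.fst_mem⟩, ⟨r, hrs.fst_mem⟩, ⟨q, hpq.snd_mem⟩,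
    ⟨s, hrs.snd_mem⟩]
  have emb : cycleGraph 4 ↪g H.coeᶜ := by
    refine ⟨⟨g, ?_⟩, ?_⟩
    · intro i j hij
      fin_cases i <;> fin_cases j <;> simp_all [g, Subtype.ext_iff] <;>
        first
        | rfl
        | (exact absurd hij.symm (by assumption)) | (exact absurd hij (by assumption))
    · intro i j; change H.coeᶜ.Adj (g i) (g j) ↔ _
      fin_cases i <;> fin_cases j <;>
        simp [g, compl_adj, Subgraph.coe_adj, Subtype.ext_iff, hpq, hrs, hpq.symm, hrs.symm,
          hpr, hps, hqr, hqs, hpr.symm, hps.symm, hqr.symm, hqs.symm, hpq', hrs', hpq'.symm,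
          hrs'.symm, h1, h2, h3, h4, h1', h2', h3', h4', cycleGraph_adj] <;>
        simp_all <;> decide
  exact (hch 4 le_rfl).false emb


lemma my_noC5 (hg : 5 ≤ G.egirth) (hch : Chordal H.coeᶜ) {a0 a1 a2 a3 a4 : V}
    (h01 : H.Adj a0 a1) (h12 : H.Adj a1 a2) (h23 : H.Adj a2 a3) (h34 : H.Adj a3 a4)
    (h40 : H.Adj a4 a0) (d02 : a0 ≠ a2) (d03 : a0 ≠ a3) (d13 : a1 ≠ a3) (d14 : a1 ≠ a4)
    (d24 : a2 ≠ a4) : False := by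
  have c02 : ¬ H.Adj a0 a2 := fun h => no_tri hg h01.adj_sub h12.adj_sub h.adj_sub
  have c13 : ¬ H.Adj a1 a3 := fun h => no_tri hg h12.adj_sub h23.adj_sub h.adj_sub
  have c24 : ¬ H.Adj a2 a4 := fun h => no_tri hg h23.adj_sub h34.adj_sub h.adj_sub
  have c03 : ¬ H.Adj a0 a3 := fun h => no_tri hg h34.adj_sub h40.adj_sub h.adj_sub.symm
  have c14 : ¬ H.Adj a1 a4 := fun h => no_tri hg h40.adj_sub h01.adj_sub h.adj_sub.symm
  have c02' : ¬ H.Adj a2 a0 := fun h => c02 h.symm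
  have c13' : ¬ H.Adj a3 a1 := fun h => c13 h.symm
  have c24' : ¬ H.Adj a4 a2 := fun h => c24 h.symm
  have c03' : ¬ H.Adj a3 a0 := fun h => c03 h.symm
  have c14' : ¬ H.Adj a4 a1 := fun h => c14 h.symm
  have e01 := h01.ne; have e12 := h12.ne; have e23 := h23.ne; have e34 := h34.ne
  have e40 := h40.ne
  let g : Fin 5 → ↥H.verts := ![⟨a0, h01.fst_mem⟩, ⟨a2, h23.fst_mem⟩, ⟨a4, h40.fst_mem⟩,
    ⟨a1, h12.fst_mem⟩, ⟨a3, h34.fst_mem⟩]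
  have emb : cycleGraph 5 ↪g H.coeᶜ := by
    refine ⟨⟨g, ?_⟩, ?_⟩
    · intro i j hij
      fin_cases i <;> fin_cases j <;> simp_all [g, Subtype.ext_iff] <;>
        first
        | rfl
        | (exact absurd hij.symm (by assumption)) | (exact absurd hij (by assumption))
    · intro i j; change H.coeᶜ.Adj (g i) (g j) ↔ _
      fin_cases i <;> fin_cases j <;>
        simp [g, compl_adj, Subgraph.coe_adj, Subtype.ext_iff, h01, h12, h23, h34, h40,
          h01.symm, h12.symm, h23.symm, h34.symm, h40.symm, c02, c13, c24, c03, c14,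
          c02', c13', c24', c03', c14', d02, d03, d13, d14, d24, d02.symm, d03.symm, d13.symm,
          d14.symm, d24.symm, e01, e12, e23, e34, e40, e01.symm, e12.symm, e23.symm, e34.symm,
          e40.symm, cycleGraph_adj] <;>
        simp_all <;> decide
  exact (hch 5 (by norm_num)).false emb
lemma fin_sub_val {n : ℕ} (a b : Fin n) : (a - b).val = (a.val + n - b.val) % n := by
  rw [Fin.sub_def]
  exact congrArg (· % n) (by omega)

lemma my_star_chordal (hg : 5 ≤ G.egirth) {u v : V} (huv : H.Adj u v)
    (hmeet : ∀ x y, H.Adj x y → x = u ∨ x = v ∨ y = u ∨ y = v) : Chordal H.coeᶜ := by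
  intro n hn
  constructor
  intro f
  have hA : ∀ i j : Fin n, i ≠ j → ¬(cycleGraph n).Adj i j → H.Adj ↑(f i) ↑(f j) := by
    intro i j hij hc
    have h2 : ¬ H.coeᶜ.Adj (f i) (f j) := fun h => hc (f.map_rel_iff.mp h)
    rw [compl_adj] at h2
    push_neg at h2
    exact (Subgraph.coe_adj _ _ _).mp (h2 (fun e => hij (f.injective e)))
  have hB : ∀ i j : Fin n, (cycleGraph n).Adj i j → ¬ H.Adj ↑(f i) ↑(f j) := by
    intro i j hc hadj
    exact ((f.map_rel_iff.mpr hc).2) ((Subgraph.coe_adj _ _ _).mpr hadj)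
  have key : ∀ i j : Fin n, (cycleGraph n).Adj i j → ↑(f i) = u → ↑(f j) = v → False := by
    intro i j hc hu hv
    exact hB i j hc (by rw [hu, hv]; exact huv)
  have key2 : ∀ (i j : Fin n) (w : V), i ≠ j → ↑(f i) = w → ↑(f j) = w → False := by
    intro i j w hij hu hv
    exact hij (f.injective (Subtype.coe_injective (hu.trans hv.symm)))
  obtain ⟨m, rfl⟩ : ∃ m, n = m + 4 := ⟨n - 4, by omega⟩
  match m with
  | 0 =>
    have e1 := hA 0 2 (by decide) (by decide)
    have e2 := hA 1 3 (by decide) (by decide)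
    rcases hmeet _ _ e1 with h|h|h|h <;> rcases hmeet _ _ e2 with h'|h'|h'|h' <;>
      first
      | exact key _ _ (by decide) h h'
      | exact key _ _ (by decide) h' h
      | exact key2 _ _ _ (by decide) h h'
  | 1 =>
    have e1 := hA 0 2 (by decide) (by decide)
    have e2 := hA 1 3 (by decide) (by decide)
    have e3 := hA 1 4 (by decide) (by decide)
    rcases hmeet _ _ e1 with h|h|h|h <;> rcases hmeet _ _ e2 with h'|h'|h'|h' <;>
      first
      | exact key _ _ (by decide) h h'
      | exact key _ _ (by decide) h' h
      | exact key2 _ _ _ (by decide) h h'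
      | (rcases hmeet _ _ e3 with h''|h''|h''|h'' <;>
          first
          | exact key2 _ _ _ (by decide) h h''
          | exact key2 _ _ _ (by decide) h' h''
          | exact key2 _ _ _ (by decide) h'' h
          | exact key2 _ _ _ (by decide) h'' h')
  | (m' + 2) =>
    have hnc : ∀ i j : Fin (m' + 2 + 4), i.val + 2 ≤ j.val → j.val + 2 ≤ m' + 2 + 4 + i.val →
        ¬(cycleGraph (m' + 2 + 4)).Adj i j := by
      intro i j h1 h2 hadj
      have hi := i.isLt
      have hj := j.isLt
      rw [cycleGraph_adj'] at hadj
      rcases hadj with h3 | h3 <;> rw [fin_sub_val] at h3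
      · rw [Nat.mod_eq_of_lt (by omega)] at h3
        omega
      · rw [show j.val + (m' + 2 + 4) - i.val = (m' + 2 + 4) + (j.val - i.val) by omega,
          Nat.add_mod_left, Nat.mod_eq_of_lt (by omega)] at h3
        omega
    have e1 := hA ⟨0, by omega⟩ ⟨2, by omega⟩ (by simp [Fin.ext_iff]) (hnc _ _ (by simp only [Fin.mk_le_mk, Fin.val_mk]; omega) (by simp only [Fin.mk_le_mk, Fin.val_mk]; omega))
    have e2 := hA ⟨2, by omega⟩ ⟨4, by omega⟩ (by simp [Fin.ext_iff]) (hnc _ _ (by simp only [Fin.mk_le_mk, Fin.val_mk]; omega) (by simp only [Fin.mk_le_mk, Fin.val_mk]; omega))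
    have e3 := hA ⟨0, by omega⟩ ⟨4, by omega⟩ (by simp [Fin.ext_iff]) (hnc _ _ (by simp only [Fin.mk_le_mk, Fin.val_mk]; omega) (by simp only [Fin.mk_le_mk, Fin.val_mk]; omega))
    exact no_tri hg e1.adj_sub e2.adj_sub e3.adj_sub
lemma my_auxB (hg : 5 ≤ G.egirth) (hch : Chordal H.coeᶜ) {v x y a b : V}
    (hvx : H.Adj v x) (hxy : H.Adj x y) (hab : H.Adj a b) (hav : H.Adj a v)
    (hax : a ≠ x) (hbv : b ≠ v) (hbx : b ≠ x) (hyv : y ≠ v) : False := by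
  have day : a ≠ y := by
    rintro rfl; exact no_tri hg hvx.adj_sub hxy.adj_sub hav.adj_sub.symm
  have dby : b ≠ y := by
    rintro rfl
    exact no_sq hg hab.adj_sub hxy.adj_sub.symm hvx.adj_sub.symm hav.adj_sub hax hyv
  have cbx : ¬ H.Adj b x := fun h =>
    no_sq hg hab.adj_sub.symm hav.adj_sub hvx.adj_sub h.adj_sub hbv hax
  have cax : ¬ H.Adj a x := fun h => no_tri hg hav.adj_sub hvx.adj_sub h.adj_sub
  have cay : ¬ H.Adj a y := fun h =>
    no_sq hg hav.adj_sub hvx.adj_sub hxy.adj_sub h.adj_sub hax hyv.symm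
  by_cases hby : H.Adj b y
  · exact my_noC5 hg hch hab.symm hav hvx hxy hby.symm hbv hbx hax day hyv.symm
  · exact my_two_K2 hch hab hxy hax day hbx dby cax cay cbx hby

lemma my_auxC (hg : 5 ≤ G.egirth) (hch : Chordal H.coeᶜ) {u v x a b : V}
    (huv : H.Adj u v) (hvx : H.Adj v x) (hxa : H.Adj x a) (hab : H.Adj a b)
    (hxu : x ≠ u) (hav : a ≠ v) (hbv : b ≠ v) (hbx : b ≠ x) : False := by
  have dau : a ≠ u := by
    rintro rfl; exact no_tri hg huv.adj_sub hvx.adj_sub hxa.adj_sub.symm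
  have dbu : b ≠ u := by
    rintro rfl
    exact no_sq hg huv.adj_sub hvx.adj_sub hxa.adj_sub hab.adj_sub.symm hxu.symm hav.symm
  have cua : ¬ H.Adj u a := fun h =>
    no_sq hg huv.adj_sub hvx.adj_sub hxa.adj_sub h.adj_sub hxu.symm hav.symm
  have cva : ¬ H.Adj v a := fun h => no_tri hg hvx.adj_sub hxa.adj_sub h.adj_sub
  have cvb : ¬ H.Adj v b := fun h =>
    no_sq hg hvx.adj_sub hxa.adj_sub hab.adj_sub h.adj_sub hav.symm hbx.symm
  by_cases hub : H.Adj u b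
  · exact my_noC5 hg hch huv hvx hxa hab hub.symm hxu.symm dau.symm hav.symm hbv.symm hbx.symm
  · exact my_two_K2 hch huv hab dau.symm dbu.symm hav.symm hbv.symm cua hub cva cvb

lemma my_aux (hg : 5 ≤ G.egirth) (hch : Chordal H.coeᶜ) {u v x y : V}
    (huv : H.Adj u v) (hvx : H.Adj v x) (hxy : H.Adj x y)
    (hxu : x ≠ u) (hyu : y ≠ u) (hyv : y ≠ v) :
    ∀ p q, H.Adj p q → p = v ∨ p = x ∨ q = v ∨ q = x := by
  intro p q hpq
  by_contra hcon
  push_neg at hcon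
  obtain ⟨hpv, hpx, hqv, hqx⟩ := hcon
  have hor : H.Adj v p ∨ H.Adj v q ∨ H.Adj x p ∨ H.Adj x q := by
    by_contra hc
    push_neg at hc
    exact my_two_K2 hch hvx hpq hpv.symm hqv.symm hpx.symm hqx.symm hc.1 hc.2.1 hc.2.2.1 hc.2.2.2
  rcases hor with h | h | h | h
  · exact my_auxB hg hch hvx hxy hpq h.symm hpx hqv hqx hyv
  · exact my_auxB hg hch hvx hxy hpq.symm h.symm hqx hpv hpx hyv
  · exact my_auxC hg hch huv hvx h hpq hxu hpv hqv hqx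
  · exact my_auxC hg hch huv hvx h hpq.symm hxu hqv hpv hpx

lemma my_exists_dom_edge (hg : 5 ≤ G.egirth) (hch : Chordal H.coeᶜ)
    (hex : ∃ p q, H.Adj p q) :
    ∃ u v, H.Adj u v ∧ ∀ p q, H.Adj p q → p = u ∨ p = v ∨ q = u ∨ q = v := by
  obtain ⟨u, v, huv⟩ := hex
  by_cases hd : ∀ p q, H.Adj p q → p = u ∨ p = v ∨ q = u ∨ q = v
  · exact ⟨u, v, huv, hd⟩
  push_neg at hd
  obtain ⟨p, q, hpq, hpu, hpv, hqu, hqv⟩ := hd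
  have hor : H.Adj u p ∨ H.Adj u q ∨ H.Adj v p ∨ H.Adj v q := by
    by_contra hc
    push_neg at hc
    exact my_two_K2 hch huv hpq hpu.symm hqu.symm hpv.symm hqv.symm hc.1 hc.2.1 hc.2.2.1 hc.2.2.2
  rcases hor with h | h | h | h
  · exact ⟨u, p, h, my_aux hg hch huv.symm h hpq hpv hqv hqu⟩
  · exact ⟨u, q, h, my_aux hg hch huv.symm h hpq.symm hqv hpv hpu⟩
  · exact ⟨v, p, h, my_aux hg hch huv h hpq hpu hqu hqv⟩
  · exact ⟨v, q, h, my_aux hg hch huv h hpq.symm hqu hpu hpv⟩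
end MyLemmas

/-- The star subgraph around an edge. -/
def starSub (G : SimpleGraph V) (e : Sym2 V) : G.Subgraph where
  verts := Set.univ
  Adj a b := G.Adj a b ∧ (a ∈ e ∨ b ∈ e)
  adj_sub h := h.1
  edge_vert _ := Set.mem_univ _
  symm := ⟨fun a b h => ⟨h.1.symm, h.2.symm⟩⟩

lemma starSub_chordal {G : SimpleGraph V} (hg : 5 ≤ G.egirth) {u v : V} (huv : G.Adj u v) :
    Chordal ((starSub G s(u, v)).coeᶜ) := by
  apply my_star_chordal hg (u := u) (v := v)
  · exact ⟨huv, Or.inl (Sym2.mem_mk_left u v)⟩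
  · intro x y h
    rcases h.2 with hx | hy
    · rcases Sym2.mem_iff.mp hx with rfl | rfl
      · exact Or.inl rfl
      · exact Or.inr (Or.inl rfl)
    · rcases Sym2.mem_iff.mp hy with rfl | rfl
      · exact Or.inr (Or.inr (Or.inl rfl))
      · exact Or.inr (Or.inr (Or.inr rfl))
lemma starSub_chordal' {G : SimpleGraph V} (hg : 5 ≤ G.egirth) {e : Sym2 V}
    (he : e ∈ G.edgeSet) : Chordal ((starSub G e).coeᶜ) := by
  induction e using Sym2.ind with
  | _ u v => exact starSub_chordal hg (G.mem_edgeSet.mp he)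

lemma mem_starSub {G : SimpleGraph V} {e f : Sym2 V} (hf : f ∈ G.edgeSet) {w : V}
    (hwe : w ∈ e) (hwf : w ∈ f) : f ∈ (starSub G e).edgeSet := by
  induction f using Sym2.ind with
  | _ x y =>
    rw [Subgraph.mem_edgeSet]
    refine ⟨G.mem_edgeSet.mp hf, ?_⟩
    rcases Sym2.mem_iff.mp hwf with rfl | rfl
    · exact Or.inl hwe
    · exact Or.inr hwe

lemma mem_starSub_self {G : SimpleGraph V} {f : Sym2 V} (hf : f ∈ G.edgeSet) :
    f ∈ (starSub G f).edgeSet := by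
  induction f using Sym2.ind with
  | _ x y => exact Subgraph.mem_edgeSet.mpr ⟨G.mem_edgeSet.mp hf, Or.inl (Sym2.mem_mk_left x y)⟩

lemma my_upper (G : SimpleGraph V) (hg : 5 ≤ G.egirth) {n : ℕ}
    (hn : n ∈ {n | ∃ D : Finset ↥G.edgeSet,
      (∀ w : ↥G.edgeSet, w ∈ D ∨ ∃ u ∈ D, G.lineGraph.Adj u w) ∧ D.card = n}) :
    n ∈ {k | ∃ H : Fin k → G.Subgraph, (∀ i, Chordal ((H i).coeᶜ)) ∧
      ∀ e ∈ G.edgeSet, ∃ i, e ∈ (H i).edgeSet} := by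
  obtain ⟨D, hdom, rfl⟩ := hn
  refine ⟨fun i => starSub G ((D.equivFin.symm i : ↥D) : ↥G.edgeSet).1, fun i => ?_, ?_⟩
  · exact starSub_chordal' hg ((D.equivFin.symm i : ↥D) : ↥G.edgeSet).2
  · intro f hf
    rcases hdom ⟨f, hf⟩ with hin | ⟨u, hu, hadj⟩
    · refine ⟨D.equivFin ⟨⟨f, hf⟩, hin⟩, ?_⟩
      simp only [Equiv.symm_apply_apply]
      exact mem_starSub_self hf
    · obtain ⟨hne', w, hw1, hw2⟩ := lineGraph_adj_iff_exists.mp hadj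
      refine ⟨D.equivFin ⟨u, hu⟩, ?_⟩
      simp only [Equiv.symm_apply_apply]
      exact mem_starSub hf hw1 hw2

lemma my_lower [Fintype V] (G : SimpleGraph V) (hg : 5 ≤ G.egirth)
    (hne : G.edgeSet.Nonempty) {k : ℕ}
    (hk : k ∈ {k | ∃ H : Fin k → G.Subgraph, (∀ i, Chordal ((H i).coeᶜ)) ∧
      ∀ e ∈ G.edgeSet, ∃ i, e ∈ (H i).edgeSet}) :
    ∃ n ∈ {n | ∃ D : Finset ↥G.edgeSet,
      (∀ w : ↥G.edgeSet, w ∈ D ∨ ∃ u ∈ D, G.lineGraph.Adj u w) ∧ D.card = n}, n ≤ k := by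
  classical
  obtain ⟨e0, he0⟩ := hne
  obtain ⟨Hf, hch, hcov⟩ := hk
  have hpick : ∀ i : Fin k, ∃ d : Sym2 V, d ∈ G.edgeSet ∧
      ∀ f ∈ (Hf i).edgeSet, ∃ w, w ∈ d ∧ w ∈ f := by
    intro i
    by_cases hx : ∃ p q, (Hf i).Adj p q
    · obtain ⟨u, v, huv, hdom'⟩ := my_exists_dom_edge hg (hch i) hx
      refine ⟨s(u, v), G.mem_edgeSet.mpr huv.adj_sub, ?_⟩
      intro f hf
      induction f using Sym2.ind with
      | _ p q =>
        rcases hdom' p q (Subgraph.mem_edgeSet.mp hf) with h | h | h | h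
        · exact ⟨p, by simp [h], by simp⟩
        · exact ⟨p, by simp [h], by simp⟩
        · exact ⟨q, by simp [h], by simp⟩
        · exact ⟨q, by simp [h], by simp⟩
    · refine ⟨e0, he0, fun f hf => absurd ?_ hx⟩
      induction f using Sym2.ind with
      | _ p q => exact ⟨p, q, Subgraph.mem_edgeSet.mp hf⟩
  choose d hd1 hd2 using hpick
  refine ⟨(Finset.image (fun i => (⟨d i, hd1 i⟩ : ↥G.edgeSet)) Finset.univ).card,
    ⟨_, ?_, rfl⟩, ?_⟩
  · intro w
    obtain ⟨i, hfi⟩ := hcov w.1 w.2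
    obtain ⟨x, hx1, hx2⟩ := hd2 i w.1 hfi
    by_cases heq : (⟨d i, hd1 i⟩ : ↥G.edgeSet) = w
    · exact Or.inl (heq ▸ Finset.mem_image_of_mem _ (Finset.mem_univ i))
    · refine Or.inr ⟨⟨d i, hd1 i⟩, Finset.mem_image_of_mem _ (Finset.mem_univ i), ?_⟩
      exact lineGraph_adj_iff_exists.mpr ⟨heq, x, hx1, hx2⟩
  · calc (Finset.image (fun i => (⟨d i, hd1 i⟩ : ↥G.edgeSet)) Finset.univ).card
        ≤ (Finset.univ : Finset (Fin k)).card := Finset.card_image_le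
      _ = k := by simp
/-- for a connected graph of girth at least `5`,
`cochord(G) = γ(L(G))`. -/
theorem cochord_eq_domNum_lineGraph [Fintype V] (G : SimpleGraph V)
    (hconn : G.Connected) (hne : G.edgeSet.Nonempty) (hg : 5 ≤ G.egirth) :
    cochord G = domNum G.lineGraph := by
  classical
  haveI : Fintype ↥G.edgeSet := (Set.toFinite G.edgeSet).fintype
  have hBne : {n | ∃ D : Finset ↥G.edgeSet,
      (∀ w : ↥G.edgeSet, w ∈ D ∨ ∃ u ∈ D, G.lineGraph.Adj u w) ∧ D.card = n}.Nonempty :=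
    ⟨(Finset.univ : Finset ↥G.edgeSet).card,
      Finset.univ, fun w => Or.inl (Finset.mem_univ w), rfl⟩
  refine le_antisymm ?_ ?_
  · exact Nat.sInf_le (my_upper G hg (Nat.sInf_mem hBne))
  · have hAne : {k | ∃ H : Fin k → G.Subgraph, (∀ i, Chordal ((H i).coeᶜ)) ∧
        ∀ e ∈ G.edgeSet, ∃ i, e ∈ (H i).edgeSet}.Nonempty :=
      ⟨_, my_upper G hg (Nat.sInf_mem hBne)⟩
    obtain ⟨n, hnB, hnk⟩ := my_lower G hg hne (Nat.sInf_mem hAne)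
    exact le_trans (Nat.sInf_le hnB) hnk
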